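/- Let X be a locally convex topological vector space (e.g., a dual space with its weak* topology) and E₁, E₂ ⊆ X. The closed cones of E₁ and E₂ can be properly separated (there exists a continuous linear functional g with g ≥ 0 on the closure of cone(E₁), g ≤ 0 on the closure of cone(E₂), and g not identically zero on their union) if and only if there exists x* ∈ E₁ with x* not in the closure of cone(E₂ ∪ −(E₁ \ {x*})), or there exists x* ∈ E₂ with x* not in the closure of cone(E₁ ∪ −(E₂ \ {x*})). -/

import Mathlib

/-- The conic hull of a set: all finite non-negative linear combinations. -/
def coneHull {X : Type*} [AddCommMonoid X] [Module ℝ X] (B : Set X) : Set X :=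
  {x | ∃ (n : ℕ) (c : Fin n → ℝ) (v : Fin n → X),
    (∀ i, 0 ≤ c i) ∧ (∀ i, v i ∈ B) ∧ x = ∑ i, c i • v i}

/-- The closed cones of `E₁` and `E₂` are properly separated: some continuous linear
functional is `≥ 0` on the first, `≤ 0` on the second, and not identically zero on their
union. -/
def ProperlySeparable {X : Type*} [AddCommGroup X] [Module ℝ X] [TopologicalSpace X]
    (E₁ E₂ : Set X) : Prop :=
  ∃ g : X →L[ℝ] ℝ,
    (∀ x ∈ closure (coneHull E₁), 0 ≤ g x) ∧
    (∀ y ∈ closure (coneHull E₂), g y ≤ 0) ∧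
    ∃ z ∈ closure (coneHull E₁) ∪ closure (coneHull E₂), g z ≠ 0

section aux

variable {X : Type*} [AddCommGroup X] [Module ℝ X]

lemma mem_coneHull_self {B : Set X} {x : X} (hx : x ∈ B) : x ∈ coneHull B :=
  ⟨1, fun _ => 1, fun _ => x, fun _ => zero_le_one, fun _ => hx, by simp⟩

lemma zero_mem_coneHull (B : Set X) : (0 : X) ∈ coneHull B :=
  ⟨0, fun _ => 0, fun _ => 0, fun i => i.elim0, fun i => i.elim0, by simp⟩

lemma coneHull_add {B : Set X} {x y : X} (hx : x ∈ coneHull B) (hy : y ∈ coneHull B) :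
    x + y ∈ coneHull B := by
  obtain ⟨n, c, v, hc, hv, rfl⟩ := hx
  obtain ⟨m, d, w, hd, hw, rfl⟩ := hy
  refine ⟨n + m, Fin.append c d, Fin.append v w, ?_, ?_, ?_⟩
  · exact Fin.addCases (fun i => by rw [Fin.append_left]; exact hc i)
      (fun i => by rw [Fin.append_right]; exact hd i)
  · exact Fin.addCases (fun i => by rw [Fin.append_left]; exact hv i)
      (fun i => by rw [Fin.append_right]; exact hw i)
  · rw [Fin.sum_univ_add]
    simp only [Fin.append_left, Fin.append_right]

lemma coneHull_smul {B : Set X} {t : ℝ} (ht : 0 ≤ t) {x : X} (hx : x ∈ coneHull B) :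
    t • x ∈ coneHull B := by
  obtain ⟨n, c, v, hc, hv, rfl⟩ := hx
  exact ⟨n, fun i => t * c i, v, fun i => mul_nonneg ht (hc i), hv, by
    rw [Finset.smul_sum]; simp [mul_smul]⟩

lemma coneHull_convex (B : Set X) : Convex ℝ (coneHull B) := fun x hx y hy a b ha hb _ =>
  coneHull_add (coneHull_smul ha hx) (coneHull_smul hb hy)

variable [TopologicalSpace X]

lemma coneHull_nonpos {B : Set X} (g : X →L[ℝ] ℝ) (h : ∀ x ∈ B, g x ≤ 0) :
    ∀ x ∈ closure (coneHull B), g x ≤ 0 := by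
  have hsub : coneHull B ⊆ {x | g x ≤ 0} := by
    rintro x ⟨n, c, v, hc, hv, rfl⟩
    simp only [Set.mem_setOf_eq, map_sum, map_smul]
    exact Finset.sum_nonpos fun i _ =>
      smul_nonpos_of_nonneg_of_nonpos (hc i) (h _ (hv i))
  exact fun x hx =>
    closure_minimal hsub (isClosed_le g.continuous continuous_const) hx

lemma coneHull_nonneg {B : Set X} (g : X →L[ℝ] ℝ) (h : ∀ x ∈ B, 0 ≤ g x) :
    ∀ x ∈ closure (coneHull B), 0 ≤ g x := by
  intro x hx
  have := coneHull_nonpos (-g) (fun y hy => by simpa using h y hy) x hx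
  simpa using this

lemma smul_mem_closure_coneHull [ContinuousSMul ℝ X] {B : Set X} {t : ℝ} (ht : 0 ≤ t)
    {x : X} (hx : x ∈ closure (coneHull B)) : t • x ∈ closure (coneHull B) := by
  have : Set.MapsTo (fun y : X => t • y) (coneHull B) (coneHull B) :=
    fun y hy => coneHull_smul ht hy
  exact this.closure (continuous_const_smul t) hx

end aux

/-- Theorem B.1: in a locally convex topological vector space, the closed
cones of `E₁` and `E₂` can be properly separated iff there exists `x* ∈ E₁` with `x*` not
in the closure of `cone(E₂ ∪ −(E₁ \ {x*}))`, or `x* ∈ E₂` with `x*` not in the closure of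
`cone(E₁ ∪ −(E₂ \ {x*}))`. -/
theorem stmt_17 {X : Type*} [AddCommGroup X] [Module ℝ X] [TopologicalSpace X]
    [IsTopologicalAddGroup X] [ContinuousSMul ℝ X] [LocallyConvexSpace ℝ X]
    (E₁ E₂ : Set X) :
    ProperlySeparable E₁ E₂ ↔
      (∃ xs ∈ E₁, xs ∉ closure (coneHull (E₂ ∪ -(E₁ \ {xs})))) ∨
      (∃ xs ∈ E₂, xs ∉ closure (coneHull (E₁ ∪ -(E₂ \ {xs})))) := by
  constructor
  · rintro ⟨g, h₁, h₂, z, hz, hgz⟩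
    have hE₁ : ∀ x ∈ E₁, 0 ≤ g x := fun x hx =>
      h₁ x (subset_closure (mem_coneHull_self hx))
    have hE₂ : ∀ x ∈ E₂, g x ≤ 0 := fun x hx =>
      h₂ x (subset_closure (mem_coneHull_self hx))
    by_cases hp : ∃ x ∈ E₁, 0 < g x
    · obtain ⟨xs, hxs, hgxs⟩ := hp
      refine Or.inl ⟨xs, hxs, fun hmem => ?_⟩
      have : g xs ≤ 0 := by
        refine coneHull_nonpos g ?_ xs hmem
        rintro y (hy | hy)
        · exact hE₂ y hy
        · rw [Set.mem_neg] at hy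
          have := hE₁ (-y) hy.1
          simpa using this
      exact absurd this (not_le.mpr hgxs)
    by_cases hn : ∃ x ∈ E₂, g x < 0
    · obtain ⟨xs, hxs, hgxs⟩ := hn
      refine Or.inr ⟨xs, hxs, fun hmem => ?_⟩
      have : 0 ≤ g xs := by
        refine coneHull_nonneg g ?_ xs hmem
        rintro y (hy | hy)
        · exact hE₁ y hy
        · rw [Set.mem_neg] at hy
          have := hE₂ (-y) hy.1
          simpa using this
      exact absurd this (not_le.mpr hgxs)
    · -- g vanishes on E₁ and E₂, contradiction
      exfalso
      push_neg at hp hn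
      have hz₁ : ∀ x ∈ E₁, g x = 0 := fun x hx => le_antisymm (hp x hx) (hE₁ x hx)
      have hz₂ : ∀ x ∈ E₂, g x = 0 := fun x hx => le_antisymm (hE₂ x hx) (hn x hx)
      rcases hz with hz | hz
      · have ha := coneHull_nonpos g (fun x hx => (hz₁ x hx).le) z hz
        have hb := coneHull_nonneg g (fun x hx => (hz₁ x hx).ge) z hz
        exact hgz (le_antisymm ha hb)
      · have ha := coneHull_nonpos g (fun x hx => (hz₂ x hx).le) z hz
        have hb := coneHull_nonneg g (fun x hx => (hz₂ x hx).ge) z hz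
        exact hgz (le_antisymm ha hb)
  · rintro (⟨xs, hxs, hmem⟩ | ⟨xs, hxs, hmem⟩)
    · -- separate xs from K := closure (coneHull (E₂ ∪ -(E₁ \ {xs})))
      set S := E₂ ∪ -(E₁ \ {xs}) with hS
      obtain ⟨f, u, hfu, huf⟩ := geometric_hahn_banach_closed_point
        ((coneHull_convex S).closure) isClosed_closure hmem
      have h0 : (0 : ℝ) < u := by
        have := hfu 0 (subset_closure (zero_mem_coneHull S))
        simpa using this
      have hKle : ∀ y ∈ closure (coneHull S), f y ≤ 0 := by
        intro y hy
        by_contra h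
        push_neg at h
        have ht : (0 : ℝ) ≤ u / f y := le_of_lt (div_pos h0 h)
        have := hfu _ (smul_mem_closure_coneHull ht hy)
        rw [map_smul] at this
        simp only [smul_eq_mul] at this
        rw [div_mul_cancel₀ u (ne_of_gt h)] at this
        exact lt_irrefl u this
      have hSle : ∀ y ∈ S, f y ≤ 0 := fun y hy =>
        hKle y (subset_closure (mem_coneHull_self hy))
      have hE₁pos : ∀ x ∈ E₁, 0 ≤ f x := by
        intro x hx
        by_cases hxx : x = xs
        · subst hxx
          exact le_of_lt (lt_trans h0 huf)
        · have : -x ∈ S := Or.inr (by rw [Set.mem_neg]; simp; exact ⟨hx, hxx⟩)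
          have := hSle _ this
          simpa using this
      refine ⟨f, coneHull_nonneg f hE₁pos, coneHull_nonpos f
        (fun y hy => hSle y (Or.inl hy)), xs,
        Or.inl (subset_closure (mem_coneHull_self hxs)), ?_⟩
      exact ne_of_gt (lt_trans h0 huf)
    · set S := E₁ ∪ -(E₂ \ {xs}) with hS
      obtain ⟨f, u, hfu, huf⟩ := geometric_hahn_banach_closed_point
        ((coneHull_convex S).closure) isClosed_closure hmem
      have h0 : (0 : ℝ) < u := by
        have := hfu 0 (subset_closure (zero_mem_coneHull S))
        simpa using this
      have hKle : ∀ y ∈ closure (coneHull S), f y ≤ 0 := by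
        intro y hy
        by_contra h
        push_neg at h
        have ht : (0 : ℝ) ≤ u / f y := le_of_lt (div_pos h0 h)
        have := hfu _ (smul_mem_closure_coneHull ht hy)
        rw [map_smul] at this
        simp only [smul_eq_mul] at this
        rw [div_mul_cancel₀ u (ne_of_gt h)] at this
        exact lt_irrefl u this
      have hSle : ∀ y ∈ S, f y ≤ 0 := fun y hy =>
        hKle y (subset_closure (mem_coneHull_self hy))
      have hE₂pos : ∀ x ∈ E₂, 0 ≤ f x := by
        intro x hx
        by_cases hxx : x = xs
        · subst hxx
          exact le_of_lt (lt_trans h0 huf)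
        · have : -x ∈ S := Or.inr (by rw [Set.mem_neg]; simp; exact ⟨hx, hxx⟩)
          have := hSle _ this
          simpa using this
      refine ⟨-f, ?_, ?_, xs, Or.inr (subset_closure (mem_coneHull_self hxs)), ?_⟩
      · intro x hx
        have := coneHull_nonpos f (fun y hy => hSle y (Or.inl hy)) x hx
        simpa using this
      · intro y hy
        have := coneHull_nonneg f hE₂pos y hy
        simpa using this
      · simpa using ne_of_gt (lt_trans h0 huf)
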